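/- Let A be a positive bounded linear operator on a complex Hilbert space H, and let K be a nonempty set of unit vectors of H. Define ber(A) = sup_{k ∈ K} |⟨A k, k⟩| and ‖A‖_ber = sup_{k, l ∈ K} |⟨A k, l⟩|. Then ‖A‖_ber = ber(A). -/

import Mathlib

open ContinuousLinearMap

noncomputable def berNum {H : Type*} [NormedAddCommGroup H] [InnerProductSpace ℂ H]
    (K : Set H) (T : H →L[ℂ] H) : ℝ :=
  sSup {x : ℝ | ∃ k ∈ K, x = ‖(inner ℂ (T k) k : ℂ)‖}

noncomputable def berNorm {H : Type*} [NormedAddCommGroup H] [InnerProductSpace ℂ H]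
    (K : Set H) (T : H →L[ℂ] H) : ℝ :=
  sSup {x : ℝ | ∃ k ∈ K, ∃ l ∈ K, x = ‖(inner ℂ (T k) l : ℂ)‖}

theorem berNorm_eq_berNum_of_positive {H : Type*} [NormedAddCommGroup H] [InnerProductSpace ℂ H] [CompleteSpace H]
    (A : H →L[ℂ] H) (hA : A.IsPositive) (K : Set H) (hK : K.Nonempty) (hK1 : ∀ k ∈ K, ‖k‖ = 1) :
    berNorm K A = berNum K A := by
  have hsym : ∀ x y : H, (inner ℂ (A x) y : ℂ) = inner ℂ x (A y) := fun x y =>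
    hA.1 x y
  -- build the pre-inner-product core associated to A
  set c : PreInnerProductSpace.Core ℂ H :=
    { inner := fun x y => inner ℂ (A x) y
      conj_inner_symm := fun x y => by
        show (starRingEnd ℂ) (inner ℂ (A y) x : ℂ) = (inner ℂ (A x) y : ℂ)
        rw [inner_conj_symm, ← hsym]
      re_inner_nonneg := fun x => hA.2 x
      add_left := fun x y z => by simp [inner_add_left]
      smul_left := fun x y r => by simp [inner_smul_left, mul_comm] } with hc
  have hcs : ∀ x y : H,
      ‖(inner ℂ (A x) y : ℂ)‖ * ‖(inner ℂ (A y) x : ℂ)‖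
        ≤ Complex.re (inner ℂ (A x) x : ℂ) * Complex.re (inner ℂ (A y) y : ℂ) :=
    fun x y => @InnerProductSpace.Core.inner_mul_inner_self_le ℂ H _ _ _ c x y
  -- sets
  set S1 := {x : ℝ | ∃ k ∈ K, x = ‖(inner ℂ (A k) k : ℂ)‖} with hS1
  set S2 := {x : ℝ | ∃ k ∈ K, ∃ l ∈ K, x = ‖(inner ℂ (A k) l : ℂ)‖} with hS2
  have hS1ne : S1.Nonempty := by
    obtain ⟨k, hk⟩ := hK
    exact ⟨_, k, hk, rfl⟩
  have hS2bdd : BddAbove S2 := by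
    refine ⟨‖A‖, ?_⟩
    rintro x ⟨k, hk, l, hl, rfl⟩
    calc ‖(inner ℂ (A k) l : ℂ)‖ ≤ ‖A k‖ * ‖l‖ := norm_inner_le_norm _ _
      _ ≤ ‖A‖ * ‖k‖ * ‖l‖ := by
          gcongr
          exact A.le_opNorm k
      _ = ‖A‖ := by rw [hK1 k hk, hK1 l hl]; ring
  have hS1bdd : BddAbove S1 := hS2bdd.mono (by rintro x ⟨k, hk, rfl⟩; exact ⟨k, hk, k, hk, rfl⟩)
  have hreal : ∀ x : H, Complex.re (inner ℂ (A x) x : ℂ) = ‖(inner ℂ (A x) x : ℂ)‖ := by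
    intro x
    have h2 : (starRingEnd ℂ) (inner ℂ (A x) x : ℂ) = inner ℂ (A x) x := by
      rw [inner_conj_symm, ← hsym]
    have him : (inner ℂ (A x) x : ℂ).im = 0 := Complex.conj_eq_iff_im.mp h2
    rw [Complex.norm_def, Complex.normSq_apply, him]
    simp only [mul_zero, add_zero]
    rw [Real.sqrt_mul_self_eq_abs]
    exact (abs_of_nonneg (hA.2 x)).symm
  have hMnonneg : 0 ≤ berNum K A := by
    obtain ⟨k, hk⟩ := hK
    exact le_trans (norm_nonneg _) (le_csSup hS1bdd ⟨k, hk, rfl⟩)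
  apply le_antisymm
  · apply csSup_le (hS1ne.mono (by rintro x ⟨k, hk, rfl⟩; exact ⟨k, hk, k, hk, rfl⟩))
    rintro x ⟨k, hk, l, hl, rfl⟩
    refine nonneg_le_nonneg_of_sq_le_sq hMnonneg ?_
    have h1 : ‖(inner ℂ (A k) k : ℂ)‖ ≤ berNum K A := le_csSup hS1bdd ⟨k, hk, rfl⟩
    have h2 : ‖(inner ℂ (A l) l : ℂ)‖ ≤ berNum K A := le_csSup hS1bdd ⟨l, hl, rfl⟩
    have key := hcs k l
    rw [hreal k, hreal l] at key
    have hsymn : ‖(inner ℂ (A l) k : ℂ)‖ = ‖(inner ℂ (A k) l : ℂ)‖ := by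
      rw [hsym k l, ← inner_conj_symm (A l) k, RCLike.norm_conj]
    calc ‖(inner ℂ (A k) l : ℂ)‖ * ‖(inner ℂ (A k) l : ℂ)‖
        = ‖(inner ℂ (A k) l : ℂ)‖ * ‖(inner ℂ (A l) k : ℂ)‖ := by rw [hsymn]
      _ ≤ ‖(inner ℂ (A k) k : ℂ)‖ * ‖(inner ℂ (A l) l : ℂ)‖ := key
      _ ≤ berNum K A * berNum K A := by
          exact mul_le_mul h1 h2 (norm_nonneg _) hMnonneg
  · exact csSup_le_csSup hS2bdd hS1ne (by rintro x ⟨k, hk, rfl⟩; exact ⟨k, hk, k, hk, rfl⟩)
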